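/- Let Λ be a real number and consider the sequence of Möbius transformations on ℝ ∪ {∞} given by r ↦ (1/(1 + Y_l/s_l)) · (-1/r + (Λ - X_l)/s_l) for 0 ≤ l ≤ n-2, where s_l > 0 and 1 + Y_l/s_l ≠ 0. Define r_0 = ∞ and r_{l+1} by applying the l-th transformation to r_l. Then Λ is an eigenvalue of the tridiagonal matrix with diagonal X_0,…,X_{n-1}, subdiagonal s_1,…,s_{n-1} and superdiagonal entries s_l(1 + Y_l/s_l) (0 ≤ l ≤ n-2) if and only if r_{n-1} satisfies -1/r_{n-1} + (Λ - X_{n-1})/s_{n-1} = 0, i.e. the evolution started at ∞ terminates at 0 after the final step. -/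
import Mathlib


open Matrix

/-- Tridiagonal matrix: diagonal `d`, subdiagonal `sub i` at `(i, i-1)`,
superdiagonal `sup i` at `(i, i+1)`. -/
def triDiag (n : ℕ) (d sub sup : ℕ → ℝ) : Matrix (Fin n) (Fin n) ℝ :=
  fun i j =>
    if (i : ℕ) = j then d i
    else if (i : ℕ) = (j : ℕ) + 1 then sub i
    else if (j : ℕ) = (i : ℕ) + 1 then sup i
    else 0

/-- The Möbius map `r ↦ a · (-1/r + b)` on the one-point compactification
`ℝ ∪ {∞}`, with the conventions `-1/∞ = 0` and `-1/0 = ∞` (for `a ≠ 0`). -/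
noncomputable def mobiusStep (a b : ℝ) (r : OnePoint ℝ) : OnePoint ℝ :=
  Option.elim r ((a * b : ℝ) : OnePoint ℝ)
    (fun x : ℝ => if x = 0 then (OnePoint.infty : OnePoint ℝ)
      else ((a * (-1 / x + b) : ℝ) : OnePoint ℝ))

lemma mobiusStep_infty (a b : ℝ) :
    mobiusStep a b OnePoint.infty = ((a * b : ℝ) : OnePoint ℝ) := rfl

lemma mobiusStep_coe (a b x : ℝ) :
    mobiusStep a b (x : OnePoint ℝ) =
      if x = 0 then (OnePoint.infty : OnePoint ℝ)
      else ((a * (-1 / x + b) : ℝ) : OnePoint ℝ) := rfl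

/-- Candidate eigenvector (shifted): `uSeq 0 = 0` plays the role of `v₋₁`,
`uSeq (l+1)` plays the role of `vₗ`. -/
noncomputable def uSeq (X Y s : ℕ → ℝ) (Λ : ℝ) : ℕ → ℝ
  | 0 => 0
  | 1 => 1
  | (l + 2) => ((Λ - X l) * uSeq X Y s Λ (l + 1) - s l * uSeq X Y s Λ l) /
      (s l * (1 + Y l / s l))

private lemma sum_if_coe {n m : ℕ} (g : Fin n → ℝ) :
    ∑ j : Fin n, (if (j : ℕ) = m then g j else 0) =
      if h : m < n then g ⟨m, h⟩ else 0 := by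
  by_cases h : m < n
  · rw [dif_pos h, Finset.sum_eq_single (⟨m, h⟩ : Fin n)]
    · simp
    · intro j _ hj
      rw [if_neg]
      exact fun hc => hj (Fin.ext hc)
    · simp
  · rw [dif_neg h]
    apply Finset.sum_eq_zero
    intro j _
    rw [if_neg]
    exact fun hc => h (hc ▸ j.2)

private lemma triDiag_row {n : ℕ} (d sub sup : ℕ → ℝ) (v : Fin n → ℝ)
    (vext : ℕ → ℝ) (hv : ∀ k, vext k = if h : k < n then v ⟨k, h⟩ else 0)
    (i : Fin n) :
    ∑ j, triDiag n d sub sup i j * v j =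
      (if (i : ℕ) = 0 then 0 else sub i * vext ((i : ℕ) - 1)) +
        d i * vext i + sup i * vext ((i : ℕ) + 1) := by
  have key : ∀ j : Fin n, triDiag n d sub sup i j * v j =
      (if (j : ℕ) = (i : ℕ) then d i * v j else 0) +
        ((if (i : ℕ) = 0 then 0 else (if (j : ℕ) = (i : ℕ) - 1 then sub i * v j else 0)) +
          (if (j : ℕ) = (i : ℕ) + 1 then sup i * v j else 0)) := by
    intro j
    unfold triDiag
    rcases i with ⟨iv, hi⟩
    rcases j with ⟨jv, hj⟩
    simp only [Fin.val_mk]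
    split_ifs <;> first | ring1 | (exfalso; omega)
  rw [Finset.sum_congr rfl (fun j _ => key j), Finset.sum_add_distrib,
    Finset.sum_add_distrib, sum_if_coe, sum_if_coe]
  have h1 : (∑ j : Fin n, if (i : ℕ) = 0 then 0
      else (if (j : ℕ) = (i : ℕ) - 1 then sub i * v j else 0)) =
      if (i : ℕ) = 0 then 0 else sub i * vext ((i : ℕ) - 1) := by
    by_cases h0 : (i : ℕ) = 0
    · simp [h0]
    · simp only [if_neg h0, sum_if_coe]
      rw [hv, dif_pos (lt_of_le_of_lt (Nat.sub_le _ _) i.2),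
        dif_pos (lt_of_le_of_lt (Nat.sub_le _ _) i.2)]
  rw [h1]
  simp only [hv]
  by_cases h2 : (i : ℕ) + 1 < n
  · rw [dif_pos i.2, dif_pos i.2, dif_pos h2, dif_pos h2]
    ring
  · rw [dif_pos i.2, dif_pos i.2, dif_neg h2, dif_neg h2]
    ring

/-- Valkó–Virág ratio evolution: `Λ` is an eigenvalue of the tridiagonal matrix with
diagonal `X`, subdiagonal `s` and superdiagonal `s_l (1 + Y_l/s_l)` iff the Markov
evolution `r_0 = ∞`, `r_{l+1} = (1/(1+Y_l/s_l)) (-1/r_l + (Λ - X_l)/s_l)` started at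
`∞` terminates at `0` after the final step, i.e. `-1/r_{n-1} + (Λ - X_{n-1})/s_{n-1} = 0`. -/
theorem tridiag_eigenvalue_iff_ratio_evolution (n : ℕ) (hn : 2 ≤ n)
    (X Y s : ℕ → ℝ) (hs : ∀ l, 0 < s l) (hY : ∀ l, 1 + Y l / s l ≠ 0)
    (Λ : ℝ) (r : ℕ → OnePoint ℝ)
    (hr0 : r 0 = OnePoint.infty)
    (hrec : ∀ l : ℕ, l ≤ n - 2 →
      r (l + 1) = mobiusStep (1 / (1 + Y l / s l)) ((Λ - X l) / s l) (r l))
    (T : Matrix (Fin n) (Fin n) ℝ)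
    (hT : T = triDiag n X s (fun l => s l * (1 + Y l / s l))) :
    (∃ v : Fin n → ℝ, v ≠ 0 ∧ T.mulVec v = Λ • v) ↔
      mobiusStep 1 ((Λ - X (n - 1)) / s (n - 1)) (r (n - 1)) = ((0 : ℝ) : OnePoint ℝ) := by
  set u := uSeq X Y s Λ with hu
  have hsne : ∀ l, s l ≠ 0 := fun l => ne_of_gt (hs l)
  have hspne : ∀ l, s l * (1 + Y l / s l) ≠ 0 := fun l => mul_ne_zero (hsne l) (hY l)
  have hsY : ∀ l, s l + Y l ≠ 0 := by
    intro l h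
    apply hY l
    have hy : Y l = -s l := by linarith
    rw [hy, neg_div, div_self (hsne l)]
    ring
  have hu0 : u 0 = 0 := rfl
  have hu1 : u 1 = 1 := rfl
  have hurec : ∀ l, u (l + 2) = ((Λ - X l) * u (l + 1) - s l * u l) /
      (s l * (1 + Y l / s l)) := fun l => rfl
  have hurec' : ∀ l, s l * (1 + Y l / s l) * u (l + 2) =
      (Λ - X l) * u (l + 1) - s l * u l := by
    intro l
    rw [hurec l, mul_div_cancel₀ _ (hspne l)]
  -- the invariant relating r and u
  have inv : ∀ l, l ≤ n - 1 →
      (¬ (u l = 0 ∧ u (l + 1) = 0)) ∧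
        r l = (if u l = 0 then OnePoint.infty
          else ((u (l + 1) / u l : ℝ) : OnePoint ℝ)) := by
    intro l
    induction l with
    | zero => intro _; refine ⟨by simp [hu0, hu1], by simp [hu0, hr0]⟩
    | succ l ih =>
      intro hl
      have hl' : l ≤ n - 2 := by omega
      obtain ⟨hpair, hrl⟩ := ih (by omega)
      rw [hrec l hl', hrl]
      by_cases h0 : u l = 0
      · have h1 : u (l + 1) ≠ 0 := fun h => hpair ⟨h0, h⟩
        rw [if_pos h0, mobiusStep_infty]
        constructor
        · exact fun h => h1 h.1
        · rw [if_neg h1, OnePoint.coe_eq_coe, hurec l, h0]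
          field_simp [hsne l, hsY l, h1]
          ring
      · rw [if_neg h0, mobiusStep_coe]
        by_cases h1 : u (l + 1) = 0
        · rw [if_pos (by rw [h1]; simp)]
          constructor
          · rintro ⟨-, h2⟩
            have e : l + 1 + 1 = l + 2 := rfl
            rw [e] at h2
            have h3 := hurec' l
            rw [h1, h2] at h3
            have h4 : s l * u l = 0 := by linarith
            rcases mul_eq_zero.mp h4 with h5 | h5
            · exact hsne l h5
            · exact h0 h5
          · rw [if_pos h1]
        · have hx : u (l + 1) / u l ≠ 0 := div_ne_zero h1 h0
          rw [if_neg hx]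
          constructor
          · exact fun h => h1 h.1
          · rw [if_neg h1, OnePoint.coe_eq_coe, hurec l]
            field_simp [hsne l, hsY l, h0, h1]
            ring
  -- the final scalar condition
  set C : ℝ := (Λ - X (n - 1)) * u n - s (n - 1) * u (n - 1) with hC
  -- RHS ↔ C = 0
  have hRHS : (mobiusStep 1 ((Λ - X (n - 1)) / s (n - 1)) (r (n - 1)) =
      ((0 : ℝ) : OnePoint ℝ)) ↔ C = 0 := by
    obtain ⟨hpair, hrl⟩ := inv (n - 1) le_rfl
    have hn1 : n - 1 + 1 = n := by omega
    rw [hn1] at hpair hrl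
    rw [hrl]
    by_cases h0 : u (n - 1) = 0
    · have h1 : u n ≠ 0 := fun h => hpair ⟨h0, h⟩
      rw [if_pos h0, mobiusStep_infty, OnePoint.coe_eq_coe, hC, h0]
      rw [one_mul, div_eq_iff (hsne (n - 1))]
      constructor
      · intro h; linear_combination u n * h
      · intro h
        have h2 : (Λ - X (n - 1)) * u n = 0 := by linarith
        rcases mul_eq_zero.mp h2 with h3 | h3
        · rw [zero_mul]; linarith
        · exact absurd h3 h1
    · rw [if_neg h0, mobiusStep_coe]
      by_cases h1 : u n = 0
      · rw [if_pos (by rw [h1]; simp)]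
        constructor
        · intro h; exact absurd h (OnePoint.infty_ne_coe 0)
        · intro h
          exfalso
          rw [hC, h1] at h
          have : s (n - 1) * u (n - 1) = 0 := by linarith
          rcases mul_eq_zero.mp this with h | h
          · exact hsne _ h
          · exact h0 h
      · have hx : u n / u (n - 1) ≠ 0 := div_ne_zero h1 h0
        rw [if_neg hx, OnePoint.coe_eq_coe, hC, one_mul]
        have key : -1 / (u n / u (n - 1)) + (Λ - X (n - 1)) / s (n - 1) =
            ((Λ - X (n - 1)) * u n - s (n - 1) * u (n - 1)) / (s (n - 1) * u n) := by
          rw [div_div_eq_mul_div]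
          field_simp [h0, h1, hsne (n - 1)]
          ring
        rw [key, div_eq_zero_iff]
        constructor
        · rintro (h | h)
          · exact h
          · exact absurd h (mul_ne_zero (hsne (n - 1)) h1)
        · intro h; exact Or.inl h
  rw [hRHS]
  -- LHS ↔ C = 0
  constructor
  · rintro ⟨v, hvne, hev⟩
    haveI : NeZero n := ⟨by omega⟩
    set vext : ℕ → ℝ := fun k => if h : k < n then v ⟨k, h⟩ else 0 with hvext
    have hrow : ∀ i : Fin n,
        (if (i : ℕ) = 0 then 0 else s i * vext ((i : ℕ) - 1)) +
          X i * vext i + s i * (1 + Y i / s i) * vext ((i : ℕ) + 1) = Λ * vext i := by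
      intro i
      have := congrFun hev i
      rw [hT] at this
      have hmv : (triDiag n X s (fun l => s l * (1 + Y l / s l))).mulVec v i =
          ∑ j, triDiag n X s (fun l => s l * (1 + Y l / s l)) i j * v j := rfl
      rw [hmv, triDiag_row _ _ _ v vext (fun k => rfl) i] at this
      have hvi : vext (i : ℕ) = v i := by
        rw [hvext]; simp only [dif_pos i.2]
      rw [hvi]
      simpa [hvi] using this
    -- v is proportional to u
    have hprop : ∀ k, k < n → vext k = v 0 * u (k + 1) := by
      intro k
      induction k using Nat.strong_induction_on with
      | _ k ih =>
        match k with
        | 0 =>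
          intro _
          have h00 : vext 0 = v 0 := by
            rw [hvext]; simp only [dif_pos (by omega : 0 < n)]
            congr 1
          rw [h00]; simp [hu1]
        | Nat.succ k =>
          intro hk
          have hk' : k < n := by omega
          have hvk : vext k = v 0 * u (k + 1) := ih k (by omega) hk'
          have hrowk := hrow ⟨k, hk'⟩
          simp only [Fin.val_mk] at hrowk
          have hsub : (if k = 0 then 0 else s k * vext (k - 1)) = s k * (v 0 * u k) := by
            by_cases h0 : k = 0
            · rw [if_pos h0, h0, hu0]; ring
            · rw [if_neg h0]
              obtain ⟨m, rfl⟩ : ∃ m, k = m + 1 := ⟨k - 1, by omega⟩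
              have hm : vext m = v 0 * u (m + 1) := ih m (by omega) (by omega)
              rw [Nat.add_sub_cancel, hm]
          rw [hsub, hvk] at hrowk
          have : s k * (1 + Y k / s k) * vext (k + 1) =
              (Λ - X k) * (v 0 * u (k + 1)) - s k * (v 0 * u k) := by linarith
          have h2 : vext (k + 1) = ((Λ - X k) * (v 0 * u (k + 1)) - s k * (v 0 * u k)) /
              (s k * (1 + Y k / s k)) := by
            rw [eq_div_iff (hspne k)]
            linarith
          rw [h2, hurec k, ← mul_div_assoc]
          congr 1
          ring
    -- v 0 ≠ 0
    have hv0 : v 0 ≠ 0 := by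
      intro h0
      apply hvne
      funext i
      have := hprop i i.2
      rw [h0] at this
      have hvi : vext (i : ℕ) = v i := by
        rw [hvext]; simp only [dif_pos i.2]
      rw [hvi] at this
      simpa using this
    -- last row gives C = 0
    have hlast := hrow ⟨n - 1, by omega⟩
    simp only [Fin.val_mk] at hlast
    have hn1 : n - 1 + 1 = n := by omega
    have he1 : vext (n - 1) = v 0 * u n := by
      rw [hprop (n - 1) (by omega), hn1]
    have he2 : (if n - 1 = 0 then 0 else s (n - 1) * vext (n - 1 - 1)) =
        s (n - 1) * (v 0 * u (n - 1)) := by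
      rw [if_neg (by omega : ¬ n - 1 = 0)]
      have e : n - 1 - 1 + 1 = n - 1 := by omega
      have h3 : vext (n - 1 - 1) = v 0 * u (n - 1 - 1 + 1) := hprop _ (by omega)
      rw [e] at h3
      rw [h3]
    have he3 : vext (n - 1 + 1) = 0 := by
      rw [hn1, hvext]; simp only [dif_neg (lt_irrefl n)]
    rw [he1, he2, he3] at hlast
    have : v 0 * C = 0 := by rw [hC]; linear_combination -hlast
    rcases mul_eq_zero.mp this with h | h
    · exact absurd h hv0
    · exact h
  · intro hC0
    refine ⟨fun i => u ((i : ℕ) + 1), ?_, ?_⟩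
    · intro h
      have := congrFun h ⟨0, by omega⟩
      simp only [Fin.val_mk, hu1] at this
      exact one_ne_zero this
    · set v : Fin n → ℝ := fun i => u ((i : ℕ) + 1) with hv
      set vext : ℕ → ℝ := fun k => if h : k < n then v ⟨k, h⟩ else 0 with hvext
      funext i
      rw [hT]
      have hmv : (triDiag n X s (fun l => s l * (1 + Y l / s l))).mulVec v i =
          ∑ j, triDiag n X s (fun l => s l * (1 + Y l / s l)) i j * v j := rfl
      rw [hmv, triDiag_row _ _ _ v vext (fun k => rfl) i]
      have hvi : vext (i : ℕ) = u ((i : ℕ) + 1) := by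
        rw [hvext]; simp only [dif_pos i.2, hv]
      simp only [Pi.smul_apply, smul_eq_mul]
      have hvval : v i = u ((i : ℕ) + 1) := rfl
      rw [hvi, hvval]
      by_cases hlt : (i : ℕ) + 1 < n
      · -- interior row: use the recursion
        have hsup : vext ((i : ℕ) + 1) = u ((i : ℕ) + 2) := by
          rw [hvext]; simp only [dif_pos hlt, hv]
        rw [hsup]
        by_cases h0 : (i : ℕ) = 0
        · rw [if_pos h0, h0]
          have := hurec' 0
          simp only [hu0] at this
          linarith
        · rw [if_neg h0]
          obtain ⟨m, hm⟩ : ∃ m, (i : ℕ) = m + 1 := ⟨(i : ℕ) - 1, by omega⟩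
          rw [hm]
          simp only [Nat.add_sub_cancel]
          have hvm : vext m = u (m + 1) := by
            rw [hvext]
            simp only [dif_pos (by omega : m < n), hv]
          rw [hvm]
          have := hurec' (m + 1)
          linarith
      · -- last row: use C = 0
        have hi : (i : ℕ) = n - 1 := by omega
        have hsup : vext ((i : ℕ) + 1) = 0 := by
          rw [hvext]; simp only [dif_neg hlt]
        rw [hsup, hi, if_neg (by omega : ¬ n - 1 = 0)]
        have hsub : vext (n - 1 - 1) = u (n - 1) := by
          rw [hvext]; simp only [dif_pos (by omega : n - 1 - 1 < n), hv]
          congr 1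
          omega
        rw [hsub]
        have hn1 : n - 1 + 1 = n := by omega
        rw [hn1]
        rw [hC] at hC0
        linear_combination -hC0
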